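/- If there exists an ε-approximate virtual valuation function for the observed data, then every cycle in the bidding graph G has mean length at least −ε. -/
import Mathlib


open Finset

/-- Euclidean inner product on `ℝⁿ`. -/
def dotp {n : ℕ} (p y : Fin n → ℝ) : ℝ := ∑ i, p i * y i

/-- A bundle is a 0-1 vector. -/
def IsBundle {n : ℕ} (y : Fin n → ℝ) : Prop := ∀ i, y i = 0 ∨ y i = 1

/-- The cyclically next index in `Fin m`. -/
def cnext {m : ℕ} (i : Fin m) : Fin m := ⟨(i.val + 1) % m, Nat.mod_lt _ i.pos⟩

-- The length of the arc of the bidding graph from bid bundle `x t` to bundle `y`: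
-- the minimum of `p s · (y - x t)` over all observations `s` bidding the same bundle as `t`.
open Classical in
noncomputable def arcLen {n T : ℕ} (p x : Fin T → Fin n → ℝ) (t : Fin T)
    (y : Fin n → ℝ) : ℝ :=
  (Finset.univ.filter fun s => x s = x t).inf' ⟨t, by simp⟩
    (fun s => dotp (p s) (y - x t))

/-- `v` is an `ε`-approximate virtual valuation function for the data `(p, x)`. -/
def IsApproxVV  {n T : ℕ} (p x : Fin T → Fin n → ℝ) (ε : ℝ)
    (v : (Fin n → ℝ) → ℝ) : Prop :=
  ∀ t : Fin T, ∀ y : Fin n → ℝ, IsBundle y →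
    v (x t) - dotp (p t) (x t) ≥ v y - dotp (p t) y - ε

/-- `v` is individually rational for the data `(p, x)`. -/
def IndivRational {n T : ℕ} (p x : Fin T → Fin n → ℝ)
    (v : (Fin n → ℝ) → ℝ) : Prop :=
  ∀ t : Fin T, v (x t) ≥ dotp (p t) (x t)

/-- The set of mean lengths of cycles of the bidding graph. -/
noncomputable def meanCycleLens {n T : ℕ} (p x : Fin T → Fin n → ℝ) : Set ℝ :=
  {r | ∃ m : ℕ, 2 ≤ m ∧ ∃ c : Fin m → Fin T,
      Function.Injective (fun i => x (c i)) ∧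
      r = (∑ i : Fin m, arcLen p x (c i) (x (c (cnext i)))) / m}
/-- If an `ε`-approximate virtual valuation function exists, then every
cycle of the bidding graph has mean length at least `-ε`. -/
theorem minMeanCycle_of_exists_approxVV {n T : ℕ}
    (p x : Fin T → Fin n → ℝ)
    (hp : ∀ t i, 0 ≤ p t i) (hx : ∀ t, IsBundle (x t)) (ε : ℝ)
    (hv : ∃ v : (Fin n → ℝ) → ℝ, IsApproxVV p x ε v) :
    ∀ m : ℕ, 2 ≤ m → ∀ c : Fin m → Fin T,
      Function.Injective (fun i => x (c i)) →
      -ε ≤ (∑ i : Fin m, arcLen p x (c i) (x (c (cnext i)))) / m := by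
  obtain ⟨v, hv⟩ := hv
  intro m hm c hc
  have hm0 : (0:ℝ) < m := by positivity
  rw [le_div_iff₀ hm0]
  have key : ∀ i : Fin m,
      v (x (c (cnext i))) - v (x (c i)) - ε ≤ arcLen p x (c i) (x (c (cnext i))) := by
    intro i
    classical
    apply Finset.le_inf'
    intro s hs
    simp only [Finset.mem_filter] at hs
    have h := hv s (x (c (cnext i))) (hx _)
    have hd : dotp (p s) (x (c (cnext i)) - x (c i))
        = dotp (p s) (x (c (cnext i))) - dotp (p s) (x s) := by
      rw [hs.2]
      simp only [dotp, Pi.sub_apply, mul_sub]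
      rw [Finset.sum_sub_distrib]
    rw [hd, hs.2]
    rw [hs.2] at h
    linarith
  have hsum : ∑ i : Fin m, (v (x (c (cnext i))) - v (x (c i)) - ε)
      ≤ ∑ i : Fin m, arcLen p x (c i) (x (c (cnext i))) :=
    Finset.sum_le_sum fun i _ => key i
  have hbij : Function.Bijective (fun i : Fin m => cnext i) := by
    have hinj : Function.Injective (fun i : Fin m => cnext i) := by
      intro i j hij
      have hij' : (i.val + 1) % m = (j.val + 1) % m := by
        have h0 := congrArg Fin.val hij
        simpa [cnext] using h0
      have hi := i.isLt
      have hj := j.isLt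
      have e : ∀ a : ℕ, a < m → ((a+1) % m = a+1 ∧ a+1 < m) ∨ ((a+1) % m = 0 ∧ a+1 = m) := by
        intro a ha
        rcases Nat.lt_or_ge (a+1) m with h|h
        · exact Or.inl ⟨Nat.mod_eq_of_lt h, h⟩
        · have hadd : a + 1 = m := by omega
          exact Or.inr ⟨by rw [hadd]; simp, hadd⟩
      rcases e i.val hi with ⟨h1,h1'⟩|⟨h1,h1'⟩ <;> rcases e j.val hj with ⟨h2,h2'⟩|⟨h2,h2'⟩ <;>
        ext <;> omega
    exact Finite.injective_iff_bijective.mp hinj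
  have htel : ∑ i : Fin m, (v (x (c (cnext i))) - v (x (c i))) = 0 := by
    rw [Finset.sum_sub_distrib]
    have := Fintype.sum_bijective (fun i : Fin m => cnext i) hbij
      (fun i => v (x (c (cnext i)))) (fun i => v (x (c i))) (fun i => rfl)
    rw [this]
    ring
  have hfinal : ∑ i : Fin m, (v (x (c (cnext i))) - v (x (c i)) - ε) = -ε * m := by
    have : ∀ i : Fin m, (v (x (c (cnext i))) - v (x (c i)) - ε)
        = (v (x (c (cnext i))) - v (x (c i))) + (-ε) := fun i => by ring
    rw [Finset.sum_congr rfl (fun i _ => this i), Finset.sum_add_distrib, htel,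
      Finset.sum_const, Finset.card_univ]
    simp
    ring
  linarith
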